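/- Let A, B : X → 2^{X*} be maximal monotone operators on a real Banach space X whose graphs are linear subspaces, and assume D(A) − D(B) = {a − b : a ∈ D(A), b ∈ D(B)} is closed in X. Then the operator A + B, defined by (A + B)x = {a* + b* : a* ∈ Ax, b* ∈ Bx} with domain D(A) ∩ D(B), is maximal monotone. -/

import Mathlib

noncomputable section

variable {X : Type*} [NormedAddCommGroup X] [NormedSpace ℝ X] [CompleteSpace X]

def IsMonotoneOp (A : Set (X × (X →L[ℝ] ℝ))) : Prop :=
  ∀ p ∈ A, ∀ q ∈ A, 0 ≤ (p.2 - q.2) (p.1 - q.1)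

def IsMaximalMonotoneOp (A : Set (X × (X →L[ℝ] ℝ))) : Prop :=
  IsMonotoneOp A ∧ ∀ x₀ : X, ∀ ys : X →L[ℝ] ℝ,
    (∀ p ∈ A, 0 ≤ (p.2 - ys) (p.1 - x₀)) → (x₀, ys) ∈ A

/-- Domain of a multivalued operator. -/
def DomOp (A : Set (X × (X →L[ℝ] ℝ))) : Set X := {x | ∃ xs, (x, xs) ∈ A}

/-- Graph of the Minkowski sum A + B. -/
def SumOp (A B : Set (X × (X →L[ℝ] ℝ))) : Set (X × (X →L[ℝ] ℝ)) :=
  {p | ∃ as bs : X →L[ℝ] ℝ, (p.1, as) ∈ A ∧ (p.1, bs) ∈ B ∧ p.2 = as + bs}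

/-- A maximal monotone operator has a closed graph. -/
lemma IsMaximalMonotoneOp.isClosed_graph {A : Set (X × (X →L[ℝ] ℝ))}
    (hA : IsMaximalMonotoneOp A) : IsClosed A := by
  have hset : A = ⋂ q ∈ A, {p : X × (X →L[ℝ] ℝ) | 0 ≤ (q.2 - p.2) (q.1 - p.1)} := by
    ext p
    simp only [Set.mem_iInter, Set.mem_setOf_eq]
    constructor
    · intro hp q hq
      exact hA.1 q hq p hp
    · intro h
      have := hA.2 p.1 p.2 (fun q hq => h q hq)
      simpa using this
  rw [hset]
  refine isClosed_biInter (fun q hq => ?_)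
  refine isClosed_le continuous_const ?_
  exact (continuous_const.sub continuous_snd).clm_apply
    ((continuous_const.sub continuous_fst))

/-- Algebraic identity for the pairing under convex combinations. -/
lemma pairing_combo (x y : X) (φ ψ : X →L[ℝ] ℝ) (θ σ : ℝ) (h : θ + σ = 1) :
    (θ • φ + σ • ψ) (θ • x + σ • y)
      = θ * φ x + σ * ψ y - θ * σ * ((φ - ψ) (x - y)) := by
  have hσ : σ = 1 - θ := by linarith
  subst hσ
  simp only [ContinuousLinearMap.add_apply, ContinuousLinearMap.smul_apply,
    ContinuousLinearMap.sub_apply, map_add, map_smul, map_sub, smul_eq_mul]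
  ring

set_option maxHeartbeats 1000000 in
/-- Core separation lemma: if `cost` is a continuous convex function on a Banach space `E`
which is nonnegative on the kernel of a continuous linear surjection `T` onto a closed
subspace `M` of `X`, then some continuous functional `u` on `X` satisfies
`u (T e) ≤ cost e` for all `e`. This is proved by separating `(0,0)` from the open convex
set `{(T e, r) : cost e < r}` (the open mapping theorem makes this set open), and then
extending the resulting functional from `M` to `X` by Hahn–Banach. -/
lemma core_sep {E : Type*} [iE : NormedAddCommGroup E]
    [iE2 : @NormedSpace ℝ E _ iE.toSeminormedAddCommGroup] [iE3 : CompleteSpace E]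
    (M : Submodule ℝ X) [CompleteSpace M]
    (T : E →L[ℝ] M) (hTsurj : Function.Surjective T)
    (cost : E → ℝ) (hcostcont : Continuous cost)
    (hconv : ∀ e₁ e₂ : E, ∀ θ σ : ℝ, 0 ≤ θ → 0 ≤ σ → θ + σ = 1 →
      cost (θ • e₁ + σ • e₂) ≤ θ * cost e₁ + σ * cost e₂)
    (h0 : ∀ e : E, T e = 0 → 0 ≤ cost e) :
    ∃ u : X →L[ℝ] ℝ, ∀ e : E, u ((T e : M) : X) ≤ cost e := by
  have hTopen : IsOpenMap T := T.isOpenMap hTsurj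
  set S : Set (M × ℝ) := (Prod.map (⇑T) (id : ℝ → ℝ)) '' {er | cost er.1 < er.2} with hS
  have hSopen : IsOpen S := by
    apply (hTopen.prodMap IsOpenMap.id)
    exact isOpen_lt (hcostcont.comp continuous_fst) continuous_snd
  have hSconvex : Convex ℝ S := by
    rintro x ⟨e₁, he₁, rfl⟩ y ⟨e₂, he₂, rfl⟩ θ σ hθ hσ hθσ
    refine ⟨θ • e₁ + σ • e₂, ?_, ?_⟩
    · show cost (θ • e₁.1 + σ • e₂.1) < (θ • e₁ + σ • e₂).2
      have hc := hconv e₁.1 e₂.1 θ σ hθ hσ hθσ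
      have hlt : θ * cost e₁.1 + σ * cost e₂.1 < θ * e₁.2 + σ * e₂.2 := by
        rcases eq_or_lt_of_le hθ with h0' | h0'
        · rcases eq_or_lt_of_le hσ with h1 | h1
          · exfalso; rw [← h0', ← h1] at hθσ; norm_num at hθσ
          · rw [← h0']; simp only [zero_mul, zero_add]
            exact mul_lt_mul_of_pos_left he₂ h1
        · rcases eq_or_lt_of_le hσ with h1 | h1
          · rw [← h1]; simp only [zero_mul, add_zero]
            exact mul_lt_mul_of_pos_left he₁ h0'
          · have g1 := mul_lt_mul_of_pos_left he₁ h0'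
            have g2 := mul_lt_mul_of_pos_left he₂ h1
            linarith
      exact lt_of_le_of_lt hc hlt
    · show Prod.map (⇑T) id (θ • e₁ + σ • e₂) = θ • Prod.map (⇑T) id e₁ + σ • Prod.map (⇑T) id e₂
      have hTc : T (θ • e₁.1 + σ • e₂.1) = θ • T e₁.1 + σ • T e₂.1 := by
        rw [map_add, map_smul, map_smul]
      exact Prod.ext hTc rfl
  have h00 : ((0 : M), (0 : ℝ)) ∉ S := by
    rintro ⟨e, he, heq⟩
    have h1 : T e.1 = 0 := congrArg Prod.fst heq
    have h3 : e.2 = (0 : ℝ) := congrArg Prod.snd heq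
    have hcost : cost e.1 < 0 := by rw [← h3]; exact he
    exact absurd (h0 e.1 h1) (not_le.mpr hcost)
  obtain ⟨Λ, hΛ⟩ := geometric_hahn_banach_open_point hSconvex hSopen h00
  have hΛ0 : Λ ((0 : M), (0 : ℝ)) = 0 := map_zero Λ
  set κ : ℝ := Λ (0, 1) with hκdef
  have hmemS : ∀ (e : E) (r : ℝ), cost e < r → ((T e : M), r) ∈ S :=
    fun e r hr => ⟨(e, r), hr, rfl⟩
  have hκneg : κ < 0 := by
    have h2 : ((T 0 : M), |cost 0| + 1) ∈ S :=
      hmemS 0 _ (lt_of_le_of_lt (le_abs_self _) (by linarith))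
    rw [map_zero] at h2
    have h3 := hΛ _ h2
    rw [hΛ0] at h3
    have h4 : ((0 : M), |cost 0| + 1) = (|cost 0| + 1) • ((0 : M), (1 : ℝ)) := by
      simp [Prod.smul_def]
    rw [h4, map_smul, smul_eq_mul] at h3
    have h5 : (0 : ℝ) < |cost 0| + 1 := by positivity
    nlinarith
  have hΛsplit : ∀ (w : M) (r : ℝ), Λ (w, r) = Λ (w, 0) + r * κ := by
    intro w r
    have hwr : ((w : M), r) = (w, (0 : ℝ)) + r • ((0 : M), (1 : ℝ)) := by
      simp [Prod.smul_def]
    rw [hwr, map_add, map_smul, smul_eq_mul]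
  have hkey : ∀ e : E, Λ (T e, 0) ≤ (-κ) * cost e := by
    intro e
    by_contra hcon
    push_neg at hcon
    have hr : ∀ r : ℝ, cost e < r → Λ (T e, 0) + r * κ < 0 := by
      intro r hrr
      have := hΛ _ (hmemS e r hrr)
      rw [hΛ0, hΛsplit] at this
      exact this
    set c := cost e with hc
    set L := Λ (T e, 0) with hL
    have hκpos : (0:ℝ) < -κ := by linarith
    have hc2 : c < L / (-κ) := by
      rw [lt_div_iff₀ hκpos]
      nlinarith [hcon]
    set r := (c + L / (-κ)) / 2 with hrdef
    have hr1 : c < r := by rw [hrdef]; linarith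
    have hr2 : r < L / (-κ) := by rw [hrdef]; linarith
    have h6 := hr r hr1
    have h7 : r * (-κ) < L := by
      rw [← lt_div_iff₀ hκpos]; exact hr2
    nlinarith
  obtain ⟨u', hu'val⟩ : ∃ u' : M →L[ℝ] ℝ, ∀ w : M, u' w = (-κ)⁻¹ * Λ (w, 0) :=
    ⟨(-κ)⁻¹ • (Λ.comp (ContinuousLinearMap.inl ℝ M ℝ)), fun w => rfl⟩
  obtain ⟨u, hu, _⟩ := exists_extension_norm_eq (M : Subspace ℝ X) u'
  refine ⟨u, fun e => ?_⟩
  have h1 := hkey e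
  have h2 : u ((T e : M) : X) = u' (T e) := hu (T e)
  rw [h2, hu'val]
  rw [inv_mul_le_iff₀ (by linarith : (0:ℝ) < -κ)]
  linarith

set_option maxHeartbeats 2000000 in
/-- The sum theorem for linear maximal monotone operators. -/
theorem sum_maximalMonotone (A B : Submodule ℝ (X × (X →L[ℝ] ℝ)))
    (hA : IsMaximalMonotoneOp (A : Set (X × (X →L[ℝ] ℝ))))
    (hB : IsMaximalMonotoneOp (B : Set (X × (X →L[ℝ] ℝ))))
    (hclosed : IsClosed {d : X | ∃ a ∈ DomOp (A : Set (X × (X →L[ℝ] ℝ))),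
      ∃ b ∈ DomOp (B : Set (X × (X →L[ℝ] ℝ))), d = a - b}) :
    IsMaximalMonotoneOp (SumOp (A : Set (X × (X →L[ℝ] ℝ))) (B : Set (X × (X →L[ℝ] ℝ)))) := by
  classical
  have hqA : ∀ p : X × (X →L[ℝ] ℝ), p ∈ A → 0 ≤ p.2 p.1 := by
    intro p hp
    have := hA.1 p hp 0 (Submodule.zero_mem A)
    simpa using this
  have hqB : ∀ p : X × (X →L[ℝ] ℝ), p ∈ B → 0 ≤ p.2 p.1 := by
    intro p hp
    have := hB.1 p hp 0 (Submodule.zero_mem B)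
    simpa using this
  constructor
  · -- monotonicity of the sum
    rintro p ⟨a1, b1, ha1, hb1, hp2⟩ q ⟨a2, b2, ha2, hb2, hq2⟩
    have h1 := hA.1 (p.1, a1) ha1 (q.1, a2) ha2
    have h2 := hB.1 (p.1, b1) hb1 (q.1, b2) hb2
    simp only [ContinuousLinearMap.sub_apply, ContinuousLinearMap.add_apply] at h1 h2 ⊢
    rw [hp2, hq2]
    simp only [ContinuousLinearMap.add_apply]
    linarith
  · -- maximality
    intro z zs hrel
    -- the subspace M = D(A) - D(B)
    set DA : Submodule ℝ X := A.map (LinearMap.fst ℝ X (X →L[ℝ] ℝ)) with hDA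
    set DB : Submodule ℝ X := B.map (LinearMap.fst ℝ X (X →L[ℝ] ℝ)) with hDB
    set M : Submodule ℝ X := DA ⊔ DB with hM
    have hDAmem : ∀ p : X × (X →L[ℝ] ℝ), p ∈ A → p.1 ∈ DA := fun p hp => ⟨p, hp, rfl⟩
    have hDBmem : ∀ p : X × (X →L[ℝ] ℝ), p ∈ B → p.1 ∈ DB := fun p hp => ⟨p, hp, rfl⟩
    have hMset : (M : Set X) = {d : X | ∃ a ∈ DomOp (A : Set (X × (X →L[ℝ] ℝ))),
        ∃ b ∈ DomOp (B : Set (X × (X →L[ℝ] ℝ))), d = a - b} := by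
      ext d
      constructor
      · intro hd
        rcases Submodule.mem_sup.mp hd with ⟨y, hy, w, hw, hyw⟩
        rcases hy with ⟨p, hp, hp1⟩
        rcases hw with ⟨q, hq, hq1⟩
        refine ⟨p.1, ⟨p.2, hp⟩, (-q).1, ⟨(-q).2, Submodule.neg_mem B hq⟩, ?_⟩
        simp only [LinearMap.fst_apply] at hp1 hq1
        simp only [Prod.fst_neg]
        rw [hp1, hq1, sub_neg_eq_add, hyw]
      · rintro ⟨a, ⟨as, ha⟩, b, ⟨bs, hb⟩, rfl⟩
        refine Submodule.mem_sup.mpr ⟨a, hDAmem (a, as) ha, -b, ?_, by abel⟩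
        exact Submodule.neg_mem DB (hDBmem (b, bs) hb)
    have hMclosed : IsClosed (M : Set X) := by rw [hMset]; exact hclosed
    have hAclosed : IsClosed (A : Set (X × (X →L[ℝ] ℝ))) := hA.isClosed_graph
    have hBclosed : IsClosed (B : Set (X × (X →L[ℝ] ℝ))) := hB.isClosed_graph
    haveI : CompleteSpace (↥M) := hMclosed.completeSpace_coe
    haveI : CompleteSpace (↥A) := hAclosed.completeSpace_coe
    haveI : CompleteSpace (↥B) := hBclosed.completeSpace_coe
    -- the difference map T : A × B → M
    have hTmem : ∀ e : ↥A × ↥B, (e.1 : X × (X →L[ℝ] ℝ)).1 - (e.2 : X × (X →L[ℝ] ℝ)).1 ∈ M :=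
      fun e => Submodule.sub_mem M (Submodule.mem_sup_left (hDAmem _ e.1.2))
        (Submodule.mem_sup_right (hDBmem _ e.2.2))
    obtain ⟨T, hT⟩ : ∃ T : (↥A × ↥B) →L[ℝ] M,
        ∀ e : ↥A × ↥B, (T e : X) = (e.1 : X × (X →L[ℝ] ℝ)).1 - (e.2 : X × (X →L[ℝ] ℝ)).1 :=
      ⟨ContinuousLinearMap.codRestrict
        (((ContinuousLinearMap.fst ℝ X (X →L[ℝ] ℝ)).comp
            (A.subtypeL.comp (ContinuousLinearMap.fst ℝ A B))) +
         ((-ContinuousLinearMap.fst ℝ X (X →L[ℝ] ℝ)).comp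
            (B.subtypeL.comp (ContinuousLinearMap.snd ℝ A B)))) M (fun e => by simpa [sub_eq_add_neg] using hTmem e), fun e => (sub_eq_add_neg _ _).symm⟩
    have hTsurj : Function.Surjective T := by
      intro m
      rcases Submodule.mem_sup.mp m.2 with ⟨y, hy, w, hw, hyw⟩
      rcases hy with ⟨p, hp, hp1⟩
      rcases hw with ⟨q, hq, hq1⟩
      refine ⟨(⟨p, hp⟩, ⟨-q, Submodule.neg_mem B hq⟩), Subtype.ext ?_⟩
      rw [hT]
      simp only [LinearMap.fst_apply] at hp1 hq1
      simp only [Prod.fst_neg]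
      rw [hp1, hq1, sub_neg_eq_add, hyw]
    -- the cost function
    set cost : ↥A × ↥B → ℝ := fun e =>
      (e.1 : X × (X →L[ℝ] ℝ)).2 ((e.1 : X × (X →L[ℝ] ℝ)).1 - z) +
        ((e.2 : X × (X →L[ℝ] ℝ)).2 - zs) ((e.2 : X × (X →L[ℝ] ℝ)).1 - z) with hcostdef
    have hcostcont : Continuous cost := by
      apply Continuous.add
      · exact (continuous_subtype_val.comp continuous_fst).snd.clm_apply
          (((continuous_subtype_val.comp continuous_fst).fst).sub continuous_const)
      · exact (((continuous_subtype_val.comp continuous_snd).snd).sub continuous_const).clm_apply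
          (((continuous_subtype_val.comp continuous_snd).fst).sub continuous_const)
    -- convexity of the cost function
    have hconv : ∀ e₁ e₂ : ↥A × ↥B, ∀ θ σ : ℝ, 0 ≤ θ → 0 ≤ σ → θ + σ = 1 →
        cost (θ • e₁ + σ • e₂) ≤ θ * cost e₁ + σ * cost e₂ := by
      intro e₁ e₂ θ σ hθ hσ hθσ
      set pa₁ := (e₁.1 : X × (X →L[ℝ] ℝ))
      set pa₂ := (e₂.1 : X × (X →L[ℝ] ℝ))
      set pb₁ := (e₁.2 : X × (X →L[ℝ] ℝ))
      set pb₂ := (e₂.2 : X × (X →L[ℝ] ℝ))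
      have key1 : (θ • pa₁ + σ • pa₂).2 ((θ • pa₁ + σ • pa₂).1 - z)
          = θ * (pa₁.2 (pa₁.1 - z)) + σ * (pa₂.2 (pa₂.1 - z))
            - θ * σ * ((pa₁ - pa₂).2 ((pa₁ - pa₂).1)) := by
        have h0 := pairing_combo (pa₁.1 - z) (pa₂.1 - z) pa₁.2 pa₂.2 θ σ hθσ
        have harg : θ • (pa₁.1 - z) + σ • (pa₂.1 - z) = (θ • pa₁ + σ • pa₂).1 - z := by
          have h1 : θ • (pa₁.1 - z) + σ • (pa₂.1 - z)
              = θ • pa₁.1 + σ • pa₂.1 - (θ + σ) • z := by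
            simp only [smul_sub, add_smul]; abel
          rw [h1, hθσ, one_smul]; rfl
        rw [harg] at h0
        simpa using h0
      have key2 : ((θ • pb₁ + σ • pb₂).2 - zs) ((θ • pb₁ + σ • pb₂).1 - z)
          = θ * ((pb₁.2 - zs) (pb₁.1 - z)) + σ * ((pb₂.2 - zs) (pb₂.1 - z))
            - θ * σ * ((pb₁ - pb₂).2 ((pb₁ - pb₂).1)) := by
        have h0 := pairing_combo (pb₁.1 - z) (pb₂.1 - z) (pb₁.2 - zs) (pb₂.2 - zs) θ σ hθσ
        have harg : θ • (pb₁.1 - z) + σ • (pb₂.1 - z) = (θ • pb₁ + σ • pb₂).1 - z := by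
          have h1 : θ • (pb₁.1 - z) + σ • (pb₂.1 - z)
              = θ • pb₁.1 + σ • pb₂.1 - (θ + σ) • z := by
            simp only [smul_sub, add_smul]; abel
          rw [h1, hθσ, one_smul]; rfl
        have hfun : θ • (pb₁.2 - zs) + σ • (pb₂.2 - zs) = (θ • pb₁ + σ • pb₂).2 - zs := by
          have h1 : θ • (pb₁.2 - zs) + σ • (pb₂.2 - zs)
              = θ • pb₁.2 + σ • pb₂.2 - (θ + σ) • zs := by
            simp only [smul_sub, add_smul]; abel
          rw [h1, hθσ, one_smul]; rfl
        rw [harg, hfun] at h0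
        have hdiff : (pb₁.2 - zs) - (pb₂.2 - zs) = pb₁.2 - pb₂.2 := by abel
        have hdiff2 : pb₁.1 - z - (pb₂.1 - z) = pb₁.1 - pb₂.1 := by abel
        rw [hdiff, hdiff2] at h0
        simpa using h0
      have hqa : 0 ≤ (pa₁ - pa₂).2 ((pa₁ - pa₂).1) :=
        hqA _ (Submodule.sub_mem A e₁.1.2 e₂.1.2)
      have hqb : 0 ≤ (pb₁ - pb₂).2 ((pb₁ - pb₂).1) :=
        hqB _ (Submodule.sub_mem B e₁.2.2 e₂.2.2)
      have hθσ' : 0 ≤ θ * σ := mul_nonneg hθ hσ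
      show (θ • pa₁ + σ • pa₂).2 ((θ • pa₁ + σ • pa₂).1 - z)
          + ((θ • pb₁ + σ • pb₂).2 - zs) ((θ • pb₁ + σ • pb₂).1 - z)
          ≤ θ * cost e₁ + σ * cost e₂
      rw [key1, key2]
      simp only [hcostdef]
      nlinarith [mul_nonneg hθσ' hqa, mul_nonneg hθσ' hqb]
    -- nonnegativity of cost on the kernel of T
    have h0 : ∀ e : ↥A × ↥B, T e = 0 → 0 ≤ cost e := by
      intro e he
      have h2 : (e.1 : X × (X →L[ℝ] ℝ)).1 - (e.2 : X × (X →L[ℝ] ℝ)).1 = 0 := by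
        rw [← hT e, he]; rfl
      have hfsteq : (e.1 : X × (X →L[ℝ] ℝ)).1 = (e.2 : X × (X →L[ℝ] ℝ)).1 := sub_eq_zero.mp h2
      have hmem : ((e.1 : X × (X →L[ℝ] ℝ)).1,
          (e.1 : X × (X →L[ℝ] ℝ)).2 + (e.2 : X × (X →L[ℝ] ℝ)).2) ∈
          SumOp (A : Set (X × (X →L[ℝ] ℝ))) (B : Set (X × (X →L[ℝ] ℝ))) := by
        refine ⟨(e.1 : X × (X →L[ℝ] ℝ)).2, (e.2 : X × (X →L[ℝ] ℝ)).2, ?_, ?_, rfl⟩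
        · exact e.1.2
        · rw [hfsteq]; exact e.2.2
      have hpos := hrel _ hmem
      simp only [hcostdef]
      simp only [ContinuousLinearMap.sub_apply, ContinuousLinearMap.add_apply] at hpos ⊢
      rw [hfsteq] at hpos ⊢
      linarith
    -- apply the core separation lemma
    letI i1 : NormedAddCommGroup (↥A × ↥B) := Prod.normedAddCommGroup
    letI i2 : @NormedSpace ℝ (↥A × ↥B) _ i1.toSeminormedAddCommGroup :=
      (Prod.normedSpace : NormedSpace ℝ (↥A × ↥B))
    letI i3 : CompleteSpace (↥A × ↥B) := inferInstance
    obtain ⟨u, hukey⟩ :=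
      @core_sep X _ _ _ (↥A × ↥B) i1 i2 i3 M _ T hTsurj cost hcostcont hconv h0
    -- restate the key inequality
    have key : ∀ p : X × (X →L[ℝ] ℝ), p ∈ A → ∀ q : X × (X →L[ℝ] ℝ), q ∈ B →
        u (p.1 - q.1) ≤ p.2 (p.1 - z) + (q.2 - zs) (q.1 - z) := by
      intro p hp q hq
      have h1 := hukey (⟨p, hp⟩, ⟨q, hq⟩)
      rw [hT] at h1
      exact h1
    -- (z, u) is monotonically related to A
    have claim1 : ∀ p ∈ (A : Set (X × (X →L[ℝ] ℝ))), 0 ≤ (p.2 - u) (p.1 - z) := by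
      intro P hP
      by_contra hneg
      push_neg at hneg
      simp only [ContinuousLinearMap.sub_apply] at hneg
      have hBrel : ∀ q ∈ (B : Set (X × (X →L[ℝ] ℝ))), 0 ≤ (q.2 - (zs - u)) (q.1 - z) := by
        intro q hq
        have k := key P hP q hq
        have hsplit : u (P.1 - q.1) = u (P.1 - z) - u (q.1 - z) := by
          rw [← map_sub]; congr 1; abel
        simp only [ContinuousLinearMap.sub_apply] at k ⊢
        rw [hsplit] at k
        linarith
      have hBmem := hB.2 z (zs - u) hBrel
      have k2 := key P hP (z, zs - u) hBmem
      simp only [sub_self, map_zero, ContinuousLinearMap.sub_apply] at k2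
      linarith
    -- (z, zs - u) is monotonically related to B
    have claim2 : ∀ q ∈ (B : Set (X × (X →L[ℝ] ℝ))), 0 ≤ (q.2 - (zs - u)) (q.1 - z) := by
      intro Q hQ
      by_contra hneg
      push_neg at hneg
      simp only [ContinuousLinearMap.sub_apply] at hneg
      have hArel : ∀ p ∈ (A : Set (X × (X →L[ℝ] ℝ))), 0 ≤ (p.2 - u) (p.1 - z) := by
        intro p hp
        have k := key p hp Q hQ
        have hsplit : u (p.1 - Q.1) = u (p.1 - z) - u (Q.1 - z) := by
          rw [← map_sub]; congr 1; abel
        simp only [ContinuousLinearMap.sub_apply] at k ⊢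
        rw [hsplit] at k
        linarith
      have hAmem := hA.2 z u hArel
      have k2 := key (z, u) hAmem Q hQ
      simp only [sub_self, map_zero, ContinuousLinearMap.sub_apply] at k2
      have hflip : u (z - Q.1) = -u (Q.1 - z) := by
        rw [← map_neg]; congr 1; abel
      rw [hflip] at k2
      linarith
    exact ⟨u, zs - u, hA.2 z u claim1, hB.2 z (zs - u) claim2, by abel⟩
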